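/- Let Ω ⊆ ℝⁿ be open, H : Ω × ℝⁿ → ℝ continuous and coercive in the second variable uniformly on compact sets (for every compact K ⊆ Ω and every C there is R such that H(x,p) > C whenever x ∈ K and |p| ≥ R). If u : Ω → ℝ is a viscosity subsolution of H(x, Du) = 0 on Ω, then u is locally Lipschitz continuous: for every compact K ⊆ Ω there is a constant C_K with |u(x) − u(y)| ≤ C_K |x − y| for all x, y ∈ K with the segment [x,y] ⊆ Ω. -/

import Mathlib

open Set Metric

/-- An upper semicontinuous function attains its maximum on a nonempty compact set. -/
lemma usc_exists_max {α : Type*} [TopologicalSpace α] {K : Set α} (hK : IsCompact K)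
    (hne : K.Nonempty) {f : α → ℝ} (hf : UpperSemicontinuousOn f K) :
    ∃ x ∈ K, ∀ y ∈ K, f y ≤ f x := by
  by_contra h
  push_neg at h
  -- for every y ∈ K there is a point with bigger value
  have h1 : ∀ y : α, y ∈ K → ∃ U : Set α, IsOpen U ∧ y ∈ U ∧
      ∃ w ∈ K, ∀ x ∈ U ∩ K, f x < f w := by
    intro y hy
    obtain ⟨w, hwK, hwlt⟩ := h y hy
    have hev : ∀ᶠ x in nhdsWithin y K, f x < f w := hf y hy (f w) hwlt
    rcases mem_nhdsWithin.1 hev with ⟨U, hUo, hyU, hU⟩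
    exact ⟨U, hUo, hyU, w, hwK, fun x hx => hU hx⟩
  choose! U hUo hyU w hwK hwlt using h1
  obtain ⟨t, htK, hcov⟩ := hK.elim_nhds_subcover U
    (fun y hy => (hUo y hy).mem_nhds (hyU y hy))
  have htne : t.Nonempty := by
    obtain ⟨x, hx⟩ := hne
    have := hcov hx
    simp only [mem_iUnion] at this
    obtain ⟨i, hi, _⟩ := this
    exact ⟨i, hi⟩
  obtain ⟨i, hit, hmax⟩ := t.exists_max_image (fun j => f (w j)) htne
  have hwiK : w i ∈ K := hwK i (htK i hit)
  have := hcov hwiK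
  simp only [mem_iUnion] at this
  obtain ⟨j, hjt, hjU⟩ := this
  have h2 : f (w i) < f (w j) := hwlt j (htK j hjt) (w i) ⟨hjU, hwiK⟩
  exact absurd (hmax j hjt) (not_le.2 h2)

/-- Cone comparison estimate for viscosity subsolutions. -/
lemma cone_estimate {n : ℕ}
    {Ω : Set (EuclideanSpace ℝ (Fin n))}
    {H : EuclideanSpace ℝ (Fin n) → EuclideanSpace ℝ (Fin n) → ℝ}
    {u : EuclideanSpace ℝ (Fin n) → ℝ}
    (husc : UpperSemicontinuousOn u Ω)
    (hsub : ∀ x ∈ Ω, ∀ φ : EuclideanSpace ℝ (Fin n) → ℝ, ContDiff ℝ 1 φ →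
      IsLocalMaxOn (fun y => u y - φ y) Ω x → H x (gradient φ x) ≤ 0)
    {x₀ : EuclideanSpace ℝ (Fin n)} {r R C M : ℝ}
    (hr : 0 < r) (hball : closedBall x₀ r ⊆ Ω)
    (hco : ∀ z ∈ closedBall x₀ r, ∀ p : EuclideanSpace ℝ (Fin n), R ≤ ‖p‖ → 0 < H z p)
    (hRC : R ≤ C) (hCpos : 0 < C)
    (hM : ∀ z ∈ closedBall x₀ r, u z ≤ M)
    (hC2 : M - u x₀ ≤ C * r) :
    ∀ y ∈ closedBall x₀ r, u y ≤ u x₀ + C * ‖y - x₀‖ := by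
  set ψ : EuclideanSpace ℝ (Fin n) → ℝ := fun z => u z + -(C * ‖z - x₀‖) with hψ
  have hx₀mem : x₀ ∈ closedBall x₀ r := mem_closedBall_self hr.le
  have hψusc : UpperSemicontinuousOn ψ (closedBall x₀ r) := by
    apply UpperSemicontinuousOn.add (husc.mono hball)
    exact (Continuous.continuousOn (by continuity)).upperSemicontinuousOn
  obtain ⟨y', hy'mem, hy'max⟩ :=
    usc_exists_max (isCompact_closedBall x₀ r) ⟨x₀, hx₀mem⟩ hψusc
  have hψx₀ : ψ x₀ = u x₀ := by simp [hψ]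
  by_cases hcase : ψ y' ≤ ψ x₀
  · intro y hy
    have h1 : ψ y ≤ ψ x₀ := le_trans (hy'max y hy) hcase
    rw [hψx₀] at h1
    simp only [hψ] at h1
    linarith
  · exfalso
    push_neg at hcase
    set w : EuclideanSpace ℝ (Fin n) := y' - x₀ with hw
    have hwne : w ≠ 0 := by
      intro h0
      have : y' = x₀ := by
        have := sub_eq_zero.1 h0
        exact this
      rw [this] at hcase
      exact lt_irrefl _ hcase
    have hwpos : 0 < ‖w‖ := norm_pos_iff.2 hwne
    -- ψ y' > ψ x₀ means u x₀ < u y' - C‖w‖, hence C‖w‖ < M - u x₀ ≤ C r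
    have hlt : ‖w‖ < r := by
      have h1 : u x₀ < u y' - C * ‖w‖ := by
        rw [hψx₀] at hcase
        simp only [hψ] at hcase
        linarith
      have h2 : u y' ≤ M := hM y' hy'mem
      have h3 : C * ‖w‖ < C * r := by linarith
      exact lt_of_mul_lt_mul_left h3 hCpos.le
    set s : ℝ := min (‖w‖ / 2) ((r - ‖w‖) / 2) with hs
    have hspos : 0 < s := lt_min (by positivity) (by linarith)
    have hs1 : s ≤ ‖w‖ / 2 := min_le_left _ _
    have hs2 : s ≤ (r - ‖w‖) / 2 := min_le_right _ _
    set b : ContDiffBump y' := ⟨s / 2, s, by positivity, by linarith⟩ with hb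
    set φ : EuclideanSpace ℝ (Fin n) → ℝ := fun z => b z * (C * ‖z - x₀‖) with hφ
    have hdisty : dist y' x₀ = ‖w‖ := by rw [dist_eq_norm]
    -- smoothness of φ
    have hφsmooth : ContDiff ℝ 1 φ := by
      rw [contDiff_iff_contDiffAt]
      intro z
      by_cases hz : dist z x₀ < ‖w‖ / 2
      · -- φ vanishes near z
        have hev : ∀ᶠ v in nhds z, φ v = 0 := by
          filter_upwards [Metric.ball_mem_nhds z (show (0:ℝ) < ‖w‖ / 2 - dist z x₀ by linarith)]
            with v hv
          have hvd : dist v x₀ < ‖w‖ / 2 := by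
            have := mem_ball.1 hv
            have h4 : dist v x₀ ≤ dist v z + dist z x₀ := dist_triangle v z x₀
            linarith
          have hbz : b v = 0 := by
            apply b.zero_of_le_dist
            have h5 : dist y' x₀ ≤ dist y' v + dist v x₀ := dist_triangle y' v x₀
            have h6 : ‖w‖ / 2 ≤ dist y' v := by rw [hdisty] at h5; linarith
            calc b.rOut = s := rfl
              _ ≤ ‖w‖ / 2 := hs1
              _ ≤ dist y' v := h6
              _ = dist v y' := dist_comm _ _
          simp [hφ, hbz]
        exact (contDiffAt_const (c := (0:ℝ))).congr_of_eventuallyEq hev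
      · -- z ≠ x₀ so the norm is smooth
        push_neg at hz
        have hzne : z - x₀ ≠ 0 := by
          intro h0
          have : z = x₀ := sub_eq_zero.1 h0
          rw [this] at hz
          simp at hz
          linarith
        have h1 : ContDiffAt ℝ 1 (fun v : EuclideanSpace ℝ (Fin n) => ‖v - x₀‖) z := by
          have := (contDiffAt_norm (𝕜 := ℝ) (n := 1) hzne)
          exact this.comp z ((contDiff_id.sub contDiff_const).contDiffAt)
        exact (b.contDiff.contDiffAt).mul (contDiffAt_const.mul h1)
    -- φ agrees with the cone near y'
    have hφeq : ∀ v ∈ ball y' (s / 2), φ v = C * ‖v - x₀‖ := by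
      intro v hv
      have hbv : b v = 1 := b.one_of_mem_closedBall (ball_subset_closedBall hv)
      simp [hφ, hbv]
    -- local max of u - φ on Ω at y'
    have hρpos : (0:ℝ) < min (s / 2) (r - ‖w‖) := lt_min (by positivity) (by linarith)
    have hmaxloc : IsLocalMaxOn (fun z => u z - φ z) Ω y' := by
      have hmem : ball y' (min (s / 2) (r - ‖w‖)) ∈ nhdsWithin y' Ω :=
        mem_nhdsWithin_of_mem_nhds (Metric.ball_mem_nhds _ hρpos)
      filter_upwards [hmem] with z hz
      have hz1 : z ∈ ball y' (s / 2) :=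
        ball_subset_ball (min_le_left _ _) hz
      have hz2 : z ∈ closedBall x₀ r := by
        have h4 : dist z y' < r - ‖w‖ := lt_of_lt_of_le (mem_ball.1 (ball_subset_ball (min_le_right _ _) hz)) le_rfl
        have h5 : dist z x₀ ≤ dist z y' + dist y' x₀ := dist_triangle z y' x₀
        rw [hdisty] at h5
        exact mem_closedBall.2 (by linarith)
      have hψz : ψ z ≤ ψ y' := hy'max z hz2
      have hφz : φ z = C * ‖z - x₀‖ := hφeq z hz1
      have hφy' : φ y' = C * ‖y' - x₀‖ := hφeq y' (mem_ball_self (by positivity))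
      simp only [hφz, hφy', hψ] at hψz ⊢
      linarith
    have hy'Ω : y' ∈ Ω := hball hy'mem
    have hHle : H y' (gradient φ y') ≤ 0 := hsub y' hy'Ω φ hφsmooth hmaxloc
    -- compute the directional derivative of φ at y' along w
    have hdiff : DifferentiableAt ℝ φ y' := (hφsmooth.differentiable one_ne_zero).differentiableAt
    set L := fderiv ℝ φ y' with hL
    have hline : HasDerivAt (fun t : ℝ => y' + t • w) w 0 := by
      have h1 : HasDerivAt (fun t : ℝ => t • w) ((1:ℝ) • w) 0 := (hasDerivAt_id (0:ℝ)).smul_const w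
      simpa using h1.const_add y'
    have hcomp : HasDerivAt (fun t : ℝ => φ (y' + t • w)) (L w) 0 := by
      have h0 : y' + (0:ℝ) • w = y' := by simp
      have hF : HasFDerivAt φ L (y' + (0:ℝ) • w) := by rw [h0]; exact hdiff.hasFDerivAt
      have := hF.comp_hasDerivAt 0 hline
      exact this
    have haff : HasDerivAt (fun t : ℝ => φ (y' + t • w)) (C * ‖w‖) 0 := by
      have hε : (0:ℝ) < min (1/2) (s / (4 * ‖w‖)) := lt_min (by norm_num) (by positivity)
      have hev : (fun t : ℝ => C * ‖w‖ + (C * ‖w‖) * t) =ᶠ[nhds (0:ℝ)]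
          (fun t : ℝ => φ (y' + t • w)) := by
        filter_upwards [Metric.ball_mem_nhds (0:ℝ) hε] with t ht
        have ht' : |t| < min (1/2) (s / (4 * ‖w‖)) := by
          have := mem_ball.1 ht
          rwa [Real.dist_eq, sub_zero] at this
        have ht1 : |t| < 1/2 := lt_of_lt_of_le ht' (min_le_left _ _)
        have ht2 : |t| < s / (4 * ‖w‖) := lt_of_lt_of_le ht' (min_le_right _ _)
        have hmemball : y' + t • w ∈ ball y' (s / 2) := by
          rw [mem_ball, dist_eq_norm]
          have : y' + t • w - y' = t • w := by abel
          rw [this, norm_smul, Real.norm_eq_abs]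
          have : |t| * ‖w‖ < (s / (4 * ‖w‖)) * ‖w‖ := by
            exact mul_lt_mul_of_pos_right ht2 hwpos
          have heq : (s / (4 * ‖w‖)) * ‖w‖ = s / 4 := by field_simp
          rw [heq] at this
          linarith
        rw [hφeq _ hmemball]
        have hptw : y' + t • w - x₀ = (1 + t) • w := by
          rw [hw]
          rw [add_smul, one_smul]
          abel
        rw [hptw, norm_smul, Real.norm_eq_abs]
        have habs : |1 + t| = 1 + t := abs_of_pos (by cases abs_lt.1 ht1; linarith)
        rw [habs]
        ring
      exact HasDerivAt.congr_of_eventuallyEq (by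
        simpa using ((hasDerivAt_id (0:ℝ)).const_mul (C * ‖w‖)).const_add (C * ‖w‖)) hev.symm
    have hLw : L w = C * ‖w‖ := hcomp.unique haff
    -- gradient inner product
    have hgrad : (inner ℝ (gradient φ y') w : ℝ) = L w := by
      rw [gradient]
      exact InnerProductSpace.toDual_symm_apply
    have hCnorm : C ≤ ‖gradient φ y'‖ := by
      have h1 : (inner ℝ (gradient φ y') w : ℝ) ≤ ‖gradient φ y'‖ * ‖w‖ :=
        real_inner_le_norm _ _
      rw [hgrad, hLw] at h1
      exact le_of_mul_le_mul_right h1 hwpos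
    have hHpos : 0 < H y' (gradient φ y') :=
      hco y' hy'mem _ (le_trans hRC hCnorm)
    linarith

/-- Coercive Hamiltonians force viscosity subsolutions of `H(x, Du) = 0` to be locally
Lipschitz continuous. -/
theorem viscositySubsolution_locally_lipschitz {n : ℕ}
    (Ω : Set (EuclideanSpace ℝ (Fin n))) (hΩ : IsOpen Ω)
    (H : EuclideanSpace ℝ (Fin n) → EuclideanSpace ℝ (Fin n) → ℝ)
    (hHcont : ContinuousOn (fun q : EuclideanSpace ℝ (Fin n) × EuclideanSpace ℝ (Fin n) =>
      H q.1 q.2) (Ω ×ˢ univ))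
    (hcoer : ∀ K : Set (EuclideanSpace ℝ (Fin n)), K ⊆ Ω → IsCompact K →
      ∀ C : ℝ, ∃ R : ℝ, ∀ x ∈ K, ∀ p : EuclideanSpace ℝ (Fin n), R ≤ ‖p‖ → C < H x p)
    (u : EuclideanSpace ℝ (Fin n) → ℝ)
    (husc : UpperSemicontinuousOn u Ω)
    (hsub : ∀ x ∈ Ω, ∀ φ : EuclideanSpace ℝ (Fin n) → ℝ, ContDiff ℝ 1 φ →
      IsLocalMaxOn (fun y => u y - φ y) Ω x → H x (gradient φ x) ≤ 0) :
    ∀ K : Set (EuclideanSpace ℝ (Fin n)), K ⊆ Ω → IsCompact K →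
      ∃ C : ℝ, ∀ x ∈ K, ∀ y ∈ K, segment ℝ x y ⊆ Ω → |u x - u y| ≤ C * ‖x - y‖ := by
  intro K hKΩ hK
  rcases K.eq_empty_or_nonempty with rfl | hne
  · exact ⟨0, by simp⟩
  obtain ⟨δ, hδpos, hδ⟩ := hK.exists_cthickening_subset_open hΩ hKΩ
  set T := Metric.cthickening δ K with hT
  have hTcomp : IsCompact T := hK.cthickening
  have hKT : K ⊆ T := Metric.self_subset_cthickening K
  have hballT : ∀ x ∈ K, Metric.closedBall x (δ / 2) ⊆ T := by
    intro x hx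
    exact (Metric.closedBall_subset_closedBall (by linarith)).trans
      (Metric.closedBall_subset_cthickening hx δ)
  -- maximum of u on T
  obtain ⟨z₀, hz₀T, hz₀max⟩ := usc_exists_max hTcomp (hne.mono hKT) (husc.mono hδ)
  set M := u z₀ with hM
  -- coercivity constant on T
  obtain ⟨R, hR⟩ := hcoer T hδ hTcomp 0
  set R₀ : ℝ := max R 1 with hR₀
  have hR₀pos : (0:ℝ) < R₀ := lt_of_lt_of_le one_pos (le_max_right _ _)
  have hco' : ∀ S : Set (EuclideanSpace ℝ (Fin n)), S ⊆ T →
      ∀ z ∈ S, ∀ p : EuclideanSpace ℝ (Fin n), R₀ ≤ ‖p‖ → 0 < H z p := by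
    intro S hS z hz p hp
    exact hR z (hS hz) p (le_trans (le_max_left _ _) hp)
  -- the one-center cone estimate with adapted constant
  have hcone : ∀ x ∈ K, ∀ Cc : ℝ, R₀ ≤ Cc → M - u x ≤ Cc * (δ / 2) →
      ∀ y ∈ Metric.closedBall x (δ / 2), u y ≤ u x + Cc * ‖y - x‖ := by
    intro x hx Cc hCc1 hCc2
    have hsubΩ : Metric.closedBall x (δ / 2) ⊆ Ω := (hballT x hx).trans hδ
    exact cone_estimate husc hsub (by positivity) hsubΩ
      (fun z hz p hp => hco' _ (hballT x hx) z hz p hp)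
      hCc1 (lt_of_lt_of_le hR₀pos hCc1)
      (fun z hz => hz₀max z (hballT x hx hz)) hCc2
  have huM : ∀ y ∈ K, u y ≤ M := fun y hy => hz₀max y (hKT hy)
  -- lower bound for u on K
  have hLB : ∀ x ∈ K, ∀ y ∈ K, dist x y ≤ δ / 4 → 2 * u x - R₀ * δ / 2 - M ≤ u y := by
    intro x hx y hy hdxy
    set Cc : ℝ := max R₀ (2 * (M - u y) / δ) with hCc
    have hMy : 0 ≤ M - u y := by have := huM y hy; linarith
    have hCc1 : R₀ ≤ Cc := le_max_left _ _
    have hCcpos : 0 < Cc := lt_of_lt_of_le hR₀pos hCc1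
    have hCc2 : M - u y ≤ Cc * (δ / 2) := by
      have h1 : 2 * (M - u y) / δ ≤ Cc := le_max_right _ _
      have h2 : (2 * (M - u y) / δ) * (δ / 2) = M - u y := by field_simp
      calc M - u y = (2 * (M - u y) / δ) * (δ / 2) := h2.symm
        _ ≤ Cc * (δ / 2) := by apply mul_le_mul_of_nonneg_right h1 (by positivity)
    have hxball : x ∈ Metric.closedBall y (δ / 2) := by
      rw [Metric.mem_closedBall]
      linarith [hdxy, hδpos]
    have hest : u x ≤ u y + Cc * ‖x - y‖ := hcone y hy Cc hCc1 hCc2 x hxball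
    have hnorm : ‖x - y‖ ≤ δ / 4 := by rw [← dist_eq_norm]; exact hdxy
    have hCle : Cc ≤ R₀ + 2 * (M - u y) / δ :=
      max_le (le_add_of_nonneg_right (by positivity)) (le_add_of_nonneg_left hR₀pos.le)
    have h3 : Cc * ‖x - y‖ ≤ (R₀ + 2 * (M - u y) / δ) * (δ / 4) := by
      calc Cc * ‖x - y‖ ≤ Cc * (δ / 4) :=
            mul_le_mul_of_nonneg_left hnorm hCcpos.le
        _ ≤ (R₀ + 2 * (M - u y) / δ) * (δ / 4) :=
            mul_le_mul_of_nonneg_right hCle (by positivity)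
    have h4 : (R₀ + 2 * (M - u y) / δ) * (δ / 4) = R₀ * δ / 4 + (M - u y) / 2 := by
      field_simp; ring
    rw [h4] at h3
    linarith
  -- uniform lower bound via a finite subcover
  obtain ⟨t, htK, hcov⟩ := hK.elim_nhds_subcover (fun x => Metric.ball x (δ / 4))
    (fun x _ => Metric.ball_mem_nhds x (by positivity))
  have htne : t.Nonempty := by
    obtain ⟨x, hx⟩ := hne
    have := hcov hx
    simp only [mem_iUnion] at this
    obtain ⟨i, hi, _⟩ := this
    exact ⟨i, hi⟩
  set m : ℝ := t.inf' htne (fun i => 2 * u i - R₀ * δ / 2 - M) with hm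
  have hmle : ∀ y ∈ K, m ≤ u y := by
    intro y hy
    have := hcov hy
    simp only [mem_iUnion] at this
    obtain ⟨i, hit, hiy⟩ := this
    have h1 : m ≤ 2 * u i - R₀ * δ / 2 - M := Finset.inf'_le _ hit
    have h2 : 2 * u i - R₀ * δ / 2 - M ≤ u y :=
      hLB i (htK i hit) y hy (by rw [dist_comm]; exact (Metric.mem_ball.1 hiy).le.trans le_rfl)
    linarith
  have hmM : m ≤ M := by
    obtain ⟨x, hx⟩ := hne
    exact le_trans (hmle x hx) (huM x hx)
  -- final constant
  set CK : ℝ := max R₀ (2 * (M - m) / δ) with hCK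
  have hCK1 : R₀ ≤ CK := le_max_left _ _
  have hCKpos : 0 < CK := lt_of_lt_of_le hR₀pos hCK1
  have hCK2 : ∀ x ∈ K, M - u x ≤ CK * (δ / 2) := by
    intro x hx
    have h1 : 2 * (M - m) / δ ≤ CK := le_max_right _ _
    have h2 : (2 * (M - m) / δ) * (δ / 2) = M - m := by field_simp
    have h3 : M - u x ≤ M - m := by have := hmle x hx; linarith
    calc M - u x ≤ M - m := h3
      _ = (2 * (M - m) / δ) * (δ / 2) := h2.symm
      _ ≤ CK * (δ / 2) := mul_le_mul_of_nonneg_right h1 (by positivity)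
  refine ⟨CK, fun x hx y hy _ => ?_⟩
  by_cases hcase : ‖x - y‖ ≤ δ / 2
  · have hyball : y ∈ Metric.closedBall x (δ / 2) := by
      rwa [Metric.mem_closedBall, dist_comm, dist_eq_norm]
    have hxball : x ∈ Metric.closedBall y (δ / 2) := by
      rwa [Metric.mem_closedBall, dist_eq_norm]
    have h1 : u y ≤ u x + CK * ‖y - x‖ := hcone x hx CK hCK1 (hCK2 x hx) y hyball
    have h2 : u x ≤ u y + CK * ‖x - y‖ := hcone y hy CK hCK1 (hCK2 y hy) x hxball
    rw [norm_sub_rev y x] at h1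
    rw [abs_sub_le_iff]
    constructor <;> linarith
  · push_neg at hcase
    have h1 : M - m ≤ CK * (δ / 2) := by
      have h2 : (2 * (M - m) / δ) * (δ / 2) = M - m := by field_simp
      calc M - m = (2 * (M - m) / δ) * (δ / 2) := h2.symm
        _ ≤ CK * (δ / 2) := mul_le_mul_of_nonneg_right (le_max_right _ _) (by positivity)
    have h3 : CK * (δ / 2) ≤ CK * ‖x - y‖ :=
      mul_le_mul_of_nonneg_left hcase.le hCKpos.le
    have h4 : u x ≤ M := huM x hx
    have h5 : u y ≤ M := huM y hy
    have h6 : m ≤ u x := hmle x hx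
    have h7 : m ≤ u y := hmle y hy
    rw [abs_sub_le_iff]
    constructor <;> linarith
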